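/- Let G be a group, H a Hilbert space, and ξ, η : G → H with ‖ξ(x)‖ ≤ 1 and ‖η(y)‖ ≤ 1 for all x, y ∈ G. Suppose E ⊆ G contains the identity and χ_E(x y⁻¹) = ⟨ξ(x), η(y)⟩ for all x, y ∈ G, where χ_E is the indicator function of E. Then E is a subgroup of G. -/

import Mathlib

open scoped Pointwise
open Classical

lemma eq_of_inner_eq_one' {H : Type*} [NormedAddCommGroup H] [InnerProductSpace ℂ H]
    {u v : H} (hu : ‖u‖ ≤ 1) (hv : ‖v‖ ≤ 1) (h : (inner ℂ u v : ℂ) = 1) : u = v := by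
  have hre : RCLike.re (inner ℂ u v : ℂ) = 1 := by rw [h]; simp
  have key : ‖u - v‖ ^ 2 ≤ 0 := by
    rw [@norm_sub_sq ℂ]
    rw [hre]
    have h0 : (0:ℝ) ≤ ‖u‖ := norm_nonneg _
    have h1 : (0:ℝ) ≤ ‖v‖ := norm_nonneg _
    nlinarith
  have : ‖u - v‖ = 0 := le_antisymm (by nlinarith [norm_nonneg (u - v)]) (norm_nonneg _)
  rwa [norm_eq_zero, sub_eq_zero] at this

theorem stmt_2 {G : Type*} [Group G] {H : Type*} [NormedAddCommGroup H]
    [InnerProductSpace ℂ H] (ξ η : G → H)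
    (hξ : ∀ x, ‖ξ x‖ ≤ 1) (hη : ∀ y, ‖η y‖ ≤ 1)
    (E : Set G) (hE : (1 : G) ∈ E)
    (hrep : ∀ x y : G, (if x * y⁻¹ ∈ E then (1 : ℂ) else 0) = inner ℂ (ξ x) (η y)) :
    ∃ S : Subgroup G, E = (S : Set G) := by
  have h1 : ∀ x : G, (inner ℂ (ξ x) (η x) : ℂ) = 1 := by
    intro x
    have := hrep x x
    rw [mul_inv_cancel, if_pos hE] at this
    exact this.symm
  have heq : ∀ x, ξ x = η x := fun x => eq_of_inner_eq_one' (hξ x) (hη x) (h1 x)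
  have hself : ∀ x : G, (inner ℂ (ξ x) (ξ x) : ℂ) = 1 := by
    intro x; rw [← h1 x, heq x]
  have hmem_iff : ∀ x y : G, x * y⁻¹ ∈ E ↔ ξ x = ξ y := by
    intro x y
    constructor
    · intro hm
      have := hrep x y
      rw [if_pos hm] at this
      exact (eq_of_inner_eq_one' (hξ x) (hη y) this.symm).trans (heq y).symm
    · intro hxy
      have := hrep x y
      rw [← heq y, hxy, hself y] at this
      by_contra hm
      rw [if_neg hm] at this
      exact zero_ne_one this
  have hmemE : ∀ x : G, x ∈ E ↔ ξ x = ξ 1 := by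
    intro x
    have := hmem_iff x 1
    simpa using this
  refine ⟨{ carrier := E
            one_mem' := hE
            mul_mem' := ?_
            inv_mem' := ?_ }, rfl⟩
  · intro a b ha hb
    rw [hmemE] at ha hb ⊢
    have : a * b * b⁻¹ ∈ E := by simpa using (hmemE a).mpr ha
    rw [hmem_iff] at this
    rw [this, hb]
  · intro a ha
    rw [hmemE] at ha
    have : (1 : G) * a⁻¹ ∈ E := (hmem_iff 1 a).mpr ha.symm
    simpa using this
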